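/- In a 2-connected graph G containing an odd cycle C and two internally disjoint paths P₁, P₂ from a vertex ξ ∉ V(C) to distinct vertices v₁, v₂ on C (each meeting C only in its endpoint), the vertex ξ lies on an odd cycle of G: if W₁, W₂ are the two arcs of C between v₁ and v₂ with L(W₁) odd, then P₁ ∪ P₂ ∪ W₁ is an odd cycle when L(P₁) + L(P₂) is even, and P₁ ∪ P₂ ∪ W₂ is an odd cycle when L(P₁) + L(P₂) is odd. -/

import Mathlib

open Matrix SimpleGraph
open scoped Classical

/-- The signless Laplacian matrix `Q(G) = D(G) + A(G)` of a simple graph. -/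
noncomputable def signlessLaplacian {V : Type*} [Fintype V] (G : SimpleGraph V) :
    Matrix V V ℝ := fun i j =>
  (if i = j then ((G.neighborSet i).ncard : ℝ) else 0) + (if G.Adj i j then 1 else 0)

/-- The least eigenvalue `q(G)` of the signless Laplacian of `G`. -/
noncomputable def leastQEig {V : Type*} [Fintype V] (G : SimpleGraph V) : ℝ :=
  sInf {μ : ℝ | ∃ x : V → ℝ, x ≠ 0 ∧ (signlessLaplacian G).mulVec x = μ • x}

/-- A graph is 2-connected if it has at least 3 vertices and no cut vertex. -/
def TwoConnected {V : Type*} [Fintype V] (G : SimpleGraph V) : Prop :=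
  3 ≤ Fintype.card V ∧
    ∀ v : V, (((⊤ : G.Subgraph).deleteVerts {v}).coe).Connected

/-- The cycle `C_n` on vertices `v_0, …, v_{n-1}`. -/
def cycleG (n : ℕ) : SimpleGraph (Fin n) :=
  SimpleGraph.fromRel (fun i j => (i.val + 1) % n = j.val)

/-- `H(i₁,…,i_k)`: the cycle `C_n` together with the chords `v_i v_{n-i}` for `i ∈ S`. -/
def Hgraph (n : ℕ) (S : Finset ℕ) : SimpleGraph (Fin n) :=
  cycleG n ⊔ SimpleGraph.fromRel (fun a b => ∃ i ∈ S, a.val = i ∧ b.val = n - i)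

/-- `Θ(j,k)`: the odd cycle `v₁v₂⋯v_{n-1}v₁` plus a vertex `v₀` adjacent to `v_j` and `v_k`. -/
def thetaJK (n j k : ℕ) : SimpleGraph (Fin n) :=
  SimpleGraph.fromRel (fun a b =>
    (1 ≤ a.val ∧ b.val = a.val + 1) ∨ (a.val = 1 ∧ b.val = n - 1) ∨
      (a.val = 0 ∧ (b.val = j ∨ b.val = k)))

/-- The graph `Θ = Θ(2, n-1)`. -/
def thetaG (n : ℕ) : SimpleGraph (Fin n) := thetaJK n 2 (n - 1)

lemma aux_append_isPath {V : Type*} {G : SimpleGraph V} {a b c : V}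
    {p : G.Walk a b} {q : G.Walk b c} (hp : p.IsPath) (hq : q.IsPath)
    (h : ∀ x ∈ p.support, x ∈ q.support → x = b) : (p.append q).IsPath := by
  rw [SimpleGraph.Walk.isPath_def, SimpleGraph.Walk.support_append, List.nodup_append]
  refine ⟨hp.support_nodup, ?_, ?_⟩
  · have := hq.support_nodup
    rw [q.support_eq_cons] at this
    exact this.of_cons
  · rintro x hxp _ hxt rfl
    have hxq : x ∈ q.support := by
      rw [q.support_eq_cons]; exact List.mem_cons_of_mem _ hxt
    have hxb := h x hxp hxq
    subst hxb
    have := hq.support_nodup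
    rw [q.support_eq_cons] at this
    exact (List.nodup_cons.mp this).1 hxt

lemma aux_append_isCycle {V : Type*} {G : SimpleGraph V} {u v : V}
    (p q : G.Walk u v) (hp : p.IsPath) (hq : q.IsPath) (hlen : 2 ≤ p.length)
    (hdisj : ∀ x ∈ p.support, x ∈ q.support → x = u ∨ x = v) :
    (p.append q.reverse).IsCycle := by
  cases p with
  | nil => simp at hlen
  | @cons _ w _ h p' =>
    rw [SimpleGraph.Walk.cons_append, SimpleGraph.Walk.cons_isCycle_iff]
    obtain ⟨hp', hup'⟩ := (SimpleGraph.Walk.cons_isPath_iff _ _).mp hp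
    constructor
    · refine aux_append_isPath hp' hq.reverse ?_
      intro x hxp' hxqr
      have hxq : x ∈ q.support := by
        rwa [SimpleGraph.Walk.support_reverse, List.mem_reverse] at hxqr
      have hxp : x ∈ (SimpleGraph.Walk.cons h p').support := by
        rw [SimpleGraph.Walk.support_cons]; exact List.mem_cons_of_mem _ hxp'
      rcases hdisj x hxp hxq with rfl | rfl
      · exact absurd hxp' hup'
      · rfl
    · intro he
      rw [SimpleGraph.Walk.edges_append] at he
      rcases List.mem_append.mp he with he | he
      · exact hup' (SimpleGraph.Walk.fst_mem_support_of_mem_edges p' he)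
      · rw [SimpleGraph.Walk.edges_reverse, List.mem_reverse] at he
        have hwq : w ∈ q.support := SimpleGraph.Walk.snd_mem_support_of_mem_edges q he
        have hwp : w ∈ (SimpleGraph.Walk.cons h p').support := by
          rw [SimpleGraph.Walk.support_cons]
          exact List.mem_cons_of_mem _ p'.start_mem_support
        rcases hdisj w hwp hwq with rfl | rfl
        · exact hup' p'.start_mem_support
        · have : p'.length = 0 := by
            by_contra hne
            have h3 : p'.support.Nodup := hp'.support_nodup
            cases p' with
            | nil => exact hne rfl
            | cons h'' p'' =>
              rw [SimpleGraph.Walk.support_cons, List.nodup_cons] at h3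
              exact h3.1 p''.end_mem_support
          simp only [SimpleGraph.Walk.length_cons] at hlen
          omega

theorem stmt7 {V : Type*} (G : SimpleGraph V) {v₁ v₂ ξ : V} (hv : v₁ ≠ v₂)
    (W₁ W₂ : G.Walk v₁ v₂) (hW₁ : W₁.IsPath) (hW₂ : W₂.IsPath)
    (hC : (W₁.append W₂.reverse).IsCycle) (hCodd : Odd (W₁.length + W₂.length))
    (hW₁odd : Odd W₁.length)
    (hξ₁ : ξ ∉ W₁.support) (hξ₂ : ξ ∉ W₂.support)
    (P₁ : G.Walk ξ v₁) (P₂ : G.Walk ξ v₂) (hP₁ : P₁.IsPath) (hP₂ : P₂.IsPath)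
    (hP₁C : ∀ a ∈ P₁.support, (a ∈ W₁.support ∨ a ∈ W₂.support) → a = v₁)
    (hP₂C : ∀ a ∈ P₂.support, (a ∈ W₁.support ∨ a ∈ W₂.support) → a = v₂)
    (hP₁₂ : ∀ a, a ∈ P₁.support → a ∈ P₂.support → a = ξ) :
    (Even (P₁.length + P₂.length) →
      (P₁.append (W₁.append P₂.reverse)).IsCycle ∧
        Odd (P₁.append (W₁.append P₂.reverse)).length) ∧
    (Odd (P₁.length + P₂.length) →
      (P₁.append (W₂.append P₂.reverse)).IsCycle ∧
        Odd (P₁.append (W₂.append P₂.reverse)).length) ∧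
    ∃ (a : V) (c : G.Walk a a), c.IsCycle ∧ Odd c.length ∧ ξ ∈ c.support := by
  classical
  have hξv₁ : ξ ≠ v₁ := fun h => hξ₁ (h ▸ W₁.start_mem_support)
  have hξv₂ : ξ ≠ v₂ := fun h => hξ₁ (h ▸ W₁.end_mem_support)
  have hP₁len : 1 ≤ P₁.length := by
    rcases Nat.eq_zero_or_pos P₁.length with h | h
    · exact absurd (SimpleGraph.Walk.eq_of_length_eq_zero h) hξv₁
    · exact h
  have hP₂len : 1 ≤ P₂.length := by
    rcases Nat.eq_zero_or_pos P₂.length with h | h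
    · exact absurd (SimpleGraph.Walk.eq_of_length_eq_zero h) hξv₂
    · exact h
  have key : ∀ (W : G.Walk v₁ v₂), W.IsPath →
      (∀ a ∈ P₁.support, a ∈ W.support → a = v₁) →
      (∀ a ∈ P₂.support, a ∈ W.support → a = v₂) →
      (P₁.append (W.append P₂.reverse)).IsCycle := by
    intro W hW hA hB
    have hWlen : 1 ≤ W.length := by
      rcases Nat.eq_zero_or_pos W.length with h | h
      · exact absurd (SimpleGraph.Walk.eq_of_length_eq_zero h) hv
      · exact h
    have hpath : (P₁.append W).IsPath := aux_append_isPath hP₁ hW hA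
    have hcyc := aux_append_isCycle (P₁.append W) P₂ hpath hP₂
      (by rw [SimpleGraph.Walk.length_append]; omega)
      (by
        intro x hx hx2
        rcases (SimpleGraph.Walk.mem_support_append_iff _ _).mp hx with h | h
        · exact Or.inl (hP₁₂ x h hx2)
        · exact Or.inr (hB x hx2 h))
    rw [SimpleGraph.Walk.append_assoc]; exact hcyc
  have hlen1 : (P₁.append (W₁.append P₂.reverse)).length
      = P₁.length + (W₁.length + P₂.length) := by
    simp [SimpleGraph.Walk.length_append, SimpleGraph.Walk.length_reverse]
  have hlen2 : (P₁.append (W₂.append P₂.reverse)).length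
      = P₁.length + (W₂.length + P₂.length) := by
    simp [SimpleGraph.Walk.length_append, SimpleGraph.Walk.length_reverse]
  have hW₂even : Even W₂.length := by
    rw [Nat.even_iff]
    rw [Nat.odd_iff] at hCodd hW₁odd
    omega
  have part1 : Even (P₁.length + P₂.length) →
      (P₁.append (W₁.append P₂.reverse)).IsCycle ∧
        Odd (P₁.append (W₁.append P₂.reverse)).length := by
    intro heven
    refine ⟨key W₁ hW₁ (fun a ha hw => hP₁C a ha (Or.inl hw))
      (fun a ha hw => hP₂C a ha (Or.inl hw)), ?_⟩
    rw [hlen1, Nat.odd_iff]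
    rw [Nat.even_iff] at heven
    rw [Nat.odd_iff] at hW₁odd
    omega
  have part2 : Odd (P₁.length + P₂.length) →
      (P₁.append (W₂.append P₂.reverse)).IsCycle ∧
        Odd (P₁.append (W₂.append P₂.reverse)).length := by
    intro hodd
    refine ⟨key W₂ hW₂ (fun a ha hw => hP₁C a ha (Or.inr hw))
      (fun a ha hw => hP₂C a ha (Or.inr hw)), ?_⟩
    rw [hlen2, Nat.odd_iff]
    rw [Nat.odd_iff] at hodd
    rw [Nat.even_iff] at hW₂even
    omega
  refine ⟨part1, part2, ?_⟩
  have hξmem : ∀ (W : G.Walk v₁ v₂),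
      ξ ∈ (P₁.append (W.append P₂.reverse)).support := by
    intro W
    rw [SimpleGraph.Walk.mem_support_append_iff]
    exact Or.inl P₁.start_mem_support
  rcases Nat.even_or_odd (P₁.length + P₂.length) with h | h
  · obtain ⟨hc, ho⟩ := part1 h
    exact ⟨ξ, _, hc, ho, hξmem W₁⟩
  · obtain ⟨hc, ho⟩ := part2 h
    exact ⟨ξ, _, hc, ho, hξmem W₂⟩
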